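/- Let f(ξ) = Re h(z) − F(t) for ξ = (z,t) ∈ ℂᵐ × ℝᵏ, with h holomorphic and F of class C². Then the 1-Laplacian of f with respect to all 2m+k real variables satisfies −Δ₁f = |∇_z h|²·ΔF + Δ₁F + Re Σᵢⱼ conj(∂²h/∂zᵢ∂zⱼ)(∂h/∂zᵢ)(∂h/∂zⱼ), where Δ₁F := |DF|²ΔF − Σᵢⱼ F_{tᵢ}F_{tⱼ}F_{tᵢtⱼ} and |∇_z h|² = Σᵢ|∂h/∂zᵢ|². -/

import Mathlib

open Complex


section
variable {m k : ℕ} {h : (Fin m → ℂ) → ℂ} {F : (Fin k → ℝ) → ℝ}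

lemma lem1 (hdiff : Differentiable ℂ h) (hF : ContDiff ℝ 2 F)
    (p : (Fin m → ℂ) × (Fin k → ℝ)) (v : Fin m → ℂ) (w : Fin k → ℝ) :
    fderiv ℝ (fun q : (Fin m → ℂ) × (Fin k → ℝ) => (h q.1).re - F q.2) p (v, w)
      = (fderiv ℂ h p.1 v).re - fderiv ℝ F p.2 w := by
  have h1 : HasFDerivAt (fun q : (Fin m → ℂ) × (Fin k → ℝ) => (h q.1).re)
      ((Complex.reCLM.comp ((fderiv ℂ h p.1).restrictScalars ℝ)).comp
        (ContinuousLinearMap.fst ℝ _ _)) p :=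
    (Complex.reCLM.hasFDerivAt.comp _
      (((hdiff p.1).hasFDerivAt.restrictScalars ℝ).comp p (hasFDerivAt_fst)))
  have h2 : HasFDerivAt (fun q : (Fin m → ℂ) × (Fin k → ℝ) => F q.2)
      ((fderiv ℝ F p.2).comp (ContinuousLinearMap.snd ℝ _ _)) p :=
    ((hF.differentiable (by norm_num) p.2).hasFDerivAt).comp p (hasFDerivAt_snd)
  rw [(h1.fun_sub h2).fderiv]
  simp

lemma lem2 (hdiff : Differentiable ℂ h) (hdiff2 : Differentiable ℂ (fun z => fderiv ℂ h z))
    (hF : ContDiff ℝ 2 F) (z : Fin m → ℂ) (t : Fin k → ℝ)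
    (v v' : Fin m → ℂ) (w w' : Fin k → ℝ) :
    fderiv ℝ (fun p : (Fin m → ℂ) × (Fin k → ℝ) =>
        fderiv ℝ (fun q : (Fin m → ℂ) × (Fin k → ℝ) => (h q.1).re - F q.2) p (v, w)) (z, t) (v', w')
      = (fderiv ℂ (fun z' => fderiv ℂ h z' v) z v').re
        - fderiv ℝ (fun t' => fderiv ℝ F t' w) t w' := by
  have heq : (fun p : (Fin m → ℂ) × (Fin k → ℝ) =>
      fderiv ℝ (fun q : (Fin m → ℂ) × (Fin k → ℝ) => (h q.1).re - F q.2) p (v, w))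
      = fun p => (fderiv ℂ h p.1 v).re - fderiv ℝ F p.2 w := by
    funext p; exact lem1 hdiff hF p v w
  rw [heq]
  -- G : z' ↦ fderiv ℂ h z' v is ℂ-differentiable
  have hG : Differentiable ℂ (fun z' => fderiv ℂ h z' v) :=
    (ContinuousLinearMap.apply ℂ ℂ v).differentiable.comp hdiff2
  have hG2 : Differentiable ℝ (fun t' => fderiv ℝ F t' w) :=
    (ContinuousLinearMap.apply ℝ ℝ w).differentiable.comp
      ((hF.fderiv_right (m := 1) (by norm_num)).differentiable (by norm_num))
  have h1 : HasFDerivAt (fun p : (Fin m → ℂ) × (Fin k → ℝ) => (fderiv ℂ h p.1 v).re)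
      ((Complex.reCLM.comp ((fderiv ℂ (fun z' => fderiv ℂ h z' v) z).restrictScalars ℝ)).comp
        (ContinuousLinearMap.fst ℝ _ _)) (z, t) :=
    (Complex.reCLM.hasFDerivAt.comp _
      ((((hG z).hasFDerivAt).restrictScalars ℝ).comp (f := Prod.fst) (z, t) (hasFDerivAt_fst)))
  have h2 : HasFDerivAt (fun p : (Fin m → ℂ) × (Fin k → ℝ) => fderiv ℝ F p.2 w)
      ((fderiv ℝ (fun t' => fderiv ℝ F t' w) t).comp (ContinuousLinearMap.snd ℝ _ _)) (z, t) :=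
    ((hG2 t).hasFDerivAt).comp (f := Prod.snd) (z, t) (hasFDerivAt_snd)
  rw [(h1.fun_sub h2).fderiv]
  simp

lemma lem3 (hdiff2 : Differentiable ℂ (fun z => fderiv ℂ h z)) (z : Fin m → ℂ)
    (v v' : Fin m → ℂ) :
    fderiv ℂ (fun z' => fderiv ℂ h z' v) z v' = fderiv ℂ (fderiv ℂ h) z v' v := by
  rw [fderiv_clm_apply (hdiff2 z) (differentiableAt_const v)]
  simp

end


lemma key (m k : ℕ) (a b : Fin m → ℝ) (c d : Fin m → Fin m → ℝ)
    (g : Fin k → ℝ) (q : Fin k → Fin k → ℝ) :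
    -((∑ x : Fin m, a x ^ 2 + ∑ x : Fin m, (-b x) ^ 2 + ∑ x : Fin k, (-g x) ^ 2) *
          (∑ x : Fin m, c x x + ∑ x : Fin m, -(c x x) + ∑ x : Fin k, -(q x x)) -
        (∑ x : Fin m, (∑ y : Fin m, a x * a y * c x y + ∑ y : Fin m, a x * -b y * -(d x y)) +
            ∑ x : Fin m,
              (∑ y : Fin m, -b x * a y * -(d x y) + ∑ y : Fin m, -b x * -b y * -(c x y)) +
          ∑ x : Fin k, ∑ y : Fin k, -g x * -g y * -(q x y)))
      = (∑ x : Fin m, (a x * a x + b x * b x)) * (∑ j : Fin k, q j j)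
        + ((∑ j : Fin k, g j ^ 2) * (∑ j : Fin k, q j j)
            - ∑ i : Fin k, ∑ j : Fin k, g i * g j * q i j)
        + ∑ x : Fin m, ∑ y : Fin m,
            ((c y x * a x - -(d y x) * b x) * a y - (c y x * b x + -(d y x) * a x) * b y) := by
  have h1 : ∑ x : Fin m, (-b x) ^ 2 = ∑ x : Fin m, b x ^ 2 :=
    Finset.sum_congr rfl fun x _ => by ring
  have h2 : ∑ x : Fin k, (-g x) ^ 2 = ∑ x : Fin k, g x ^ 2 :=
    Finset.sum_congr rfl fun x _ => by ring
  have h3 : ∑ x : Fin m, -(c x x) = -∑ x : Fin m, c x x := by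
    simp
  have h4 : ∑ x : Fin k, -(q x x) = -∑ x : Fin k, q x x := by
    simp
  have h5 : ∑ x : Fin m, (a x * a x + b x * b x) = ∑ x : Fin m, a x ^ 2 + ∑ x : Fin m, b x ^ 2 := by
    rw [← Finset.sum_add_distrib]
    exact Finset.sum_congr rfl fun x _ => by ring
  have hZZ1 : ∑ x : Fin m, (∑ y : Fin m, a x * a y * c x y + ∑ y : Fin m, a x * -b y * -(d x y))
      = (∑ x : Fin m, ∑ y : Fin m, a x * a y * c x y)
        + ∑ x : Fin m, ∑ y : Fin m, a x * b y * d x y := by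
    rw [Finset.sum_add_distrib]
    congr 1
    exact Finset.sum_congr rfl fun x _ => Finset.sum_congr rfl fun y _ => by ring
  have hZZ2 : ∑ x : Fin m, (∑ y : Fin m, -b x * a y * -(d x y) + ∑ y : Fin m, -b x * -b y * -(c x y))
      = (∑ x : Fin m, ∑ y : Fin m, b x * a y * d x y)
        - ∑ x : Fin m, ∑ y : Fin m, b x * b y * c x y := by
    rw [Finset.sum_add_distrib, sub_eq_add_neg]
    congr 1
    · exact Finset.sum_congr rfl fun x _ => Finset.sum_congr rfl fun y _ => by ring
    · rw [← Finset.sum_neg_distrib]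
      exact Finset.sum_congr rfl fun x _ => by
        rw [← Finset.sum_neg_distrib]
        exact Finset.sum_congr rfl fun y _ => by ring
  have hTT : ∑ x : Fin k, ∑ y : Fin k, -g x * -g y * -(q x y)
      = -∑ x : Fin k, ∑ y : Fin k, g x * g y * q x y := by
    rw [← Finset.sum_neg_distrib]
    exact Finset.sum_congr rfl fun x _ => by
      rw [← Finset.sum_neg_distrib]
      exact Finset.sum_congr rfl fun y _ => by ring
  have hM : ∑ x : Fin m, ∑ y : Fin m,
        ((c y x * a x - -(d y x) * b x) * a y - (c y x * b x + -(d y x) * a x) * b y)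
      = (∑ x : Fin m, ∑ y : Fin m, a x * a y * c x y)
        + (∑ x : Fin m, ∑ y : Fin m, a x * b y * d x y)
        + ((∑ x : Fin m, ∑ y : Fin m, b x * a y * d x y)
            - ∑ x : Fin m, ∑ y : Fin m, b x * b y * c x y) := by
    rw [Finset.sum_comm]
    have : ∀ x y : Fin m,
        ((c x y * a y - -(d x y) * b y) * a x - (c x y * b y + -(d x y) * a y) * b x)
          = a x * a y * c x y + a x * b y * d x y + (b x * a y * d x y - b x * b y * c x y) :=
      fun x y => by ring
    calc ∑ y : Fin m, ∑ x : Fin m,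
          ((c y x * a x - -(d y x) * b x) * a y - (c y x * b x + -(d y x) * a x) * b y)
        = ∑ x : Fin m, ∑ y : Fin m,
            (a x * a y * c x y + a x * b y * d x y + (b x * a y * d x y - b x * b y * c x y)) :=
          Finset.sum_congr rfl fun x _ => Finset.sum_congr rfl fun y _ => this x y
      _ = _ := by
          simp [Finset.sum_add_distrib, Finset.sum_sub_distrib]
  rw [h1, h2, h3, h4, h5, hZZ1, hZZ2, hTT, hM]
  ring


/-- For `f ξ = Re h(z) − F(t)`, `ξ = (z, t) ∈ ℂᵐ × ℝᵏ`, with `h` holomorphic and `F` of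
class C², the 1-Laplacian of `f` in all `2m + k` real variables satisfies
`−Δ₁ f = |∇_z h|² ΔF + Δ₁ F + Re Σᵢⱼ conj(h''_{zᵢzⱼ}) h'_{zᵢ} h'_{zⱼ}`. -/
theorem stmt_12 (m k : ℕ) (h : (Fin m → ℂ) → ℂ) (F : (Fin k → ℝ) → ℝ)
    (hdiff : Differentiable ℂ h) (hdiff2 : Differentiable ℂ (fun z => fderiv ℂ h z))
    (hF : ContDiff ℝ 2 F) :
    ∀ z : Fin m → ℂ, ∀ t : Fin k → ℝ,
      (let f : (Fin m → ℂ) × (Fin k → ℝ) → ℝ := fun p => (h p.1).re - F p.2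
       let e : (Fin m ⊕ Fin m) ⊕ Fin k → (Fin m → ℂ) × (Fin k → ℝ) :=
         Sum.elim (Sum.elim (fun i => (Pi.single i 1, 0)) (fun i => (Pi.single i I, 0)))
           (fun j => (0, Pi.single j 1))
       (-((∑ a : (Fin m ⊕ Fin m) ⊕ Fin k, (fderiv ℝ f (z, t) (e a)) ^ 2)
            * (∑ a : (Fin m ⊕ Fin m) ⊕ Fin k,
                fderiv ℝ (fun p => fderiv ℝ f p (e a)) (z, t) (e a))
          - ∑ a : (Fin m ⊕ Fin m) ⊕ Fin k, ∑ b : (Fin m ⊕ Fin m) ⊕ Fin k,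
              fderiv ℝ f (z, t) (e a) * fderiv ℝ f (z, t) (e b)
                * fderiv ℝ (fun p => fderiv ℝ f p (e b)) (z, t) (e a))
        = (∑ i : Fin m, ‖fderiv ℂ h z (Pi.single i 1)‖ ^ 2)
              * (∑ j : Fin k,
                  fderiv ℝ (fun t' => fderiv ℝ F t' (Pi.single j 1)) t (Pi.single j 1))
          + ((∑ j : Fin k, (fderiv ℝ F t (Pi.single j 1)) ^ 2)
                * (∑ j : Fin k,
                    fderiv ℝ (fun t' => fderiv ℝ F t' (Pi.single j 1)) t (Pi.single j 1))
              - ∑ i : Fin k, ∑ j : Fin k,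
                  fderiv ℝ F t (Pi.single i 1) * fderiv ℝ F t (Pi.single j 1)
                    * fderiv ℝ (fun t' => fderiv ℝ F t' (Pi.single j 1)) t (Pi.single i 1))
          + (∑ i : Fin m, ∑ j : Fin m,
              (starRingEnd ℂ)
                  (fderiv ℂ (fun z' => fderiv ℂ h z' (Pi.single i 1)) z (Pi.single j 1))
                * fderiv ℂ h z (Pi.single i 1) * fderiv ℂ h z (Pi.single j 1)).re)) := by
  intro z t
  simp only [Fintype.sum_sum_type, Sum.elim_inl, Sum.elim_inr]
  simp only [lem2 hdiff hdiff2 hF]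
  simp only [lem1 hdiff hF]
  simp only [lem3 hdiff2]
  simp only [map_zero, sub_zero, zero_sub, Complex.zero_re]
  have hI : ∀ (i : Fin m), (Pi.single i Complex.I : Fin m → ℂ)
      = Complex.I • (Pi.single i 1 : Fin m → ℂ) := by
    intro i
    have := Pi.single_smul (f := fun _ : Fin m => ℂ) i Complex.I 1
    rw [smul_eq_mul, mul_one] at this
    exact this
  simp only [hI, map_smul, ContinuousLinearMap.smul_apply, smul_eq_mul, Complex.mul_re,
    Complex.mul_im, Complex.I_re, Complex.I_im, ContinuousLinearMap.zero_apply,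
    fderiv_fun_const, Pi.zero_apply, mul_zero, zero_mul, sub_zero, zero_sub, neg_neg,
    one_mul, mul_one, zero_add, add_zero, Finset.sum_const_zero, Complex.zero_re, neg_zero,
    Complex.sq_norm, Complex.normSq_apply, Complex.conj_re, Complex.conj_im, Complex.re_sum]
  exact key m k (fun i => (fderiv ℂ h z (Pi.single i 1)).re)
    (fun i => (fderiv ℂ h z (Pi.single i 1)).im)
    (fun i j => (fderiv ℂ (fderiv ℂ h) z (Pi.single i 1) (Pi.single j 1)).re)
    (fun i j => (fderiv ℂ (fderiv ℂ h) z (Pi.single i 1) (Pi.single j 1)).im)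
    (fun j => fderiv ℝ F t (Pi.single j 1))
    (fun i j => fderiv ℝ (fun t' => fderiv ℝ F t' (Pi.single j 1)) t (Pi.single i 1))
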